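/- Let 0 < q < 1, P > 0, and p a real with 1/2 ≤ p < (q+1)/2. Define Δ = (p/q - (1-p)/(1-q))·P, Δ̄ = P/q (vanilla pseudo-labeling), and Δ̂ = 0 (random-label assignment). Then |Δ - Δ̄| > |Δ - Δ̂|. -/

import Mathlib

theorem stmt4 (p q P : ℝ) (hq0 : 0 < q) (hq1 : q < 1) (hP : 0 < P)
    (hp1 : 1/2 ≤ p) (hp2 : p < (q + 1)/2)
    (Δ Δbar Δhat : ℝ) (hΔ : Δ = (p/q - (1 - p)/(1 - q)) * P)
    (hΔbar : Δbar = P/q) (hΔhat : Δhat = 0) :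
    |Δ - Δbar| > |Δ - Δhat| := by
  subst hΔ hΔbar hΔhat
  have hq1' : 0 < 1 - q := by linarith
  have hD : 0 < q * (1 - q) := mul_pos hq0 hq1'
  have hqne : q ≠ 0 := ne_of_gt hq0
  have hqne' : (1 : ℝ) - q ≠ 0 := ne_of_gt hq1'
  have e1 : (p/q - (1 - p)/(1 - q)) * P - 0 = (p - q) * P / (q*(1-q)) := by
    rw [sub_zero]; field_simp; ring
  have e2 : (p/q - (1 - p)/(1 - q)) * P - P/q = -((1 - p) * P / (q*(1-q))) := by
    field_simp; ring
  rw [e1, e2, abs_neg]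
  have hpos : 0 < (1 - p) * P / (q*(1-q)) := by
    apply div_pos (mul_pos (by linarith) hP) hD
  rw [abs_of_pos hpos, gt_iff_lt, abs_lt]
  constructor
  · rw [← neg_div, div_lt_div_iff_of_pos_right hD]
    nlinarith [mul_pos hq1' hP]
  · rw [div_lt_div_iff_of_pos_right hD]
    nlinarith [mul_pos hq1' hP]
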